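/- Let N ≥ 1, a ∈ (0,1), w ≥ 0. On a probability space let (W_n)_{n≥1}, (T_n)_{n≥1}, (S_n)_{n≥1} and (A_n)_{n≥2} be nonnegative random variables and (Y_n)_{n≥1} random variables with values in Fin N such that almost surely W_1 = w, T_1 = 0, and for all n ≥ 1: W_{n+1} = max(a W_n + S_n − A_{n+1}, 0) and T_{n+1} = T_n + A_{n+1}. Let μ_i be probability measures on [0,∞) with β_i(z) := ∫ e^{-z x} dμ_i(x), and α_{i j} finite measures on [0,∞) with A_{i j}(z) := ∫ e^{-z t} dα_{i j}(t). Assume: for every n ≥ 1, all i, j, every bounded measurable φ : ℝ × ℝ → ℂ, and all z₁, z₂ ∈ ℂ with Re z₁ ≥ 0 and Re z₂ ≥ 0, E[φ(W_n, T_n) e^{-z₁ S_n − z₂ A_{n+1}} 1_{Y_n=i} 1_{Y_{n+1}=j}] = E[φ(W_n, T_n) 1_{Y_n=i}] β_i(z₁) A_{i j}(z₂). Set p_j := P(Y_1 = j). Then for all r, s, η ∈ ℂ with |r| < 1, Re s = 0 and Re η ≥ 0, the series Z_j(r,s,η) := Σ_{n≥1} r^n E[e^{-s W_n − η T_n} 1_{Y_n=j}]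 and V_j(r,s,η) := Σ_{n≥1} r^{n+1} E[(1 − e^{-s·min(a W_n + S_n − A_{n+1}, 0)}) e^{-η T_{n+1}} 1_{Y_{n+1}=j}] converge absolutely, and for every j: Z_j(r,s,η) − r p_j e^{-s w} = r Σ_i Z_i(r, a s, η) β_i(s) A_{i j}(η − s) + V_j(r,s,η). -/

import Mathlib

open MeasureTheory Set

/-- Terms of the series `Z_j(r,s,η) = Σ_{n≥1} r^n E[e^{-s W_n − η T_n} 1_{Y_n=j}]`
(indexed so that term `n` corresponds to time `n+1`). -/
noncomputable def ZserTerm {Ω : Type*} [MeasureSpace Ω] {N : ℕ}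
    (W T : ℕ → Ω → ℝ) (Y : ℕ → Ω → Fin N) (j : Fin N) (r s η : ℂ) (n : ℕ) : ℂ :=
  r ^ (n + 1) * ∫ ω, Complex.exp (-s * W (n + 1) ω - η * T (n + 1) ω) *
    (if Y (n + 1) ω = j then (1 : ℂ) else 0)

/-- Terms of the series
`V_j(r,s,η) = Σ_{n≥1} r^{n+1} E[(1 − e^{-s·min(a W_n + S_n − A_{n+1}, 0)}) e^{-η T_{n+1}} 1_{Y_{n+1}=j}]`
(indexed so that term `n` corresponds to time `n+1`). -/
noncomputable def VserTerm {Ω : Type*} [MeasureSpace Ω] {N : ℕ}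
    (W S A T : ℕ → Ω → ℝ) (Y : ℕ → Ω → Fin N) (a : ℝ) (j : Fin N)
    (r s η : ℂ) (n : ℕ) : ℂ :=
  r ^ (n + 2) * ∫ ω,
    (1 - Complex.exp (-s * (min (a * W (n + 1) ω + S (n + 1) ω - A (n + 2) ω) 0 : ℝ))) *
      Complex.exp (-η * T (n + 2) ω) * (if Y (n + 2) ω = j then (1 : ℂ) else 0)

/- ### Auxiliary lemmas -/

lemma aux_norm_exp_le_one {z : ℂ} (hz : z.re ≤ 0) : ‖Complex.exp z‖ ≤ 1 := by
  rw [Complex.norm_exp]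
  exact Real.exp_le_one_iff.mpr hz

lemma aux_ind_norm_le_one {p : Prop} [Decidable p] : ‖if p then (1:ℂ) else 0‖ ≤ 1 := by
  split <;> simp

/-- The key pointwise splitting identity. -/
lemma aux_key (s η : ℂ) (u v x t : ℝ) :
    Complex.exp (-s * ((max (u + v - x) 0 : ℝ) : ℂ) - η * ((t + x : ℝ) : ℂ))
      = Complex.exp (-s * (u:ℂ) - η * (t:ℂ)) * Complex.exp (-s * (v:ℂ) - (η - s) * (x:ℂ))
        + (1 - Complex.exp (-s * ((min (u + v - x) 0 : ℝ) : ℂ))) *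
            Complex.exp (-η * ((t + x : ℝ) : ℂ)) := by
  have e1 : Complex.exp (-s * (u:ℂ) - η * (t:ℂ)) * Complex.exp (-s*(v:ℂ) - (η-s)*(x:ℂ))
      = Complex.exp (-s * ((u+v-x : ℝ):ℂ) - η * ((t+x : ℝ):ℂ)) := by
    rw [← Complex.exp_add]; congr 1; push_cast; ring
  have e2 : Complex.exp (-s * ((u+v-x : ℝ):ℂ) - η * ((t+x : ℝ):ℂ))
      = Complex.exp (-s * ((u+v-x : ℝ):ℂ)) * Complex.exp (-η * ((t+x : ℝ):ℂ)) := by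
    rw [← Complex.exp_add]; congr 1; ring
  rcases le_or_gt 0 (u + v - x) with h | h
  · rw [max_eq_left h, min_eq_right h, e1]
    norm_num
  · rw [max_eq_right h.le, min_eq_left h.le, e1, e2]
    simp only [Complex.ofReal_zero, mul_zero, zero_sub, neg_mul]
    ring

/-- Integrability of bounded measurable functions on a probability space. -/
lemma aux_integrable_of_bounded {Ω : Type*} [MeasureSpace Ω]
    [IsProbabilityMeasure (volume : Measure Ω)] {f : Ω → ℂ}
    (hf : Measurable f) (C : ℝ) (h : ∀ ω, ‖f ω‖ ≤ C) : Integrable f :=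
  (integrable_const C).mono' hf.aestronglyMeasurable (Filter.Eventually.of_forall h)

theorem stmt_9 (N : ℕ) (hN : 1 ≤ N) (a : ℝ) (ha : a ∈ Set.Ioo (0:ℝ) 1)
    (w : ℝ) (hw : 0 ≤ w)
    (Ω : Type*) [MeasureSpace Ω] [IsProbabilityMeasure (volume : Measure Ω)]
    (W T S A : ℕ → Ω → ℝ) (Y : ℕ → Ω → Fin N)
    (hWmeas : ∀ n, Measurable (W n)) (hTmeas : ∀ n, Measurable (T n))
    (hSmeas : ∀ n, Measurable (S n)) (hAmeas : ∀ n, Measurable (A n))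
    (hYmeas : ∀ n, Measurable (Y n))
    (hWpos : ∀ n, 1 ≤ n → ∀ ω, 0 ≤ W n ω) (hTpos : ∀ n, 1 ≤ n → ∀ ω, 0 ≤ T n ω)
    (hSpos : ∀ n, 1 ≤ n → ∀ ω, 0 ≤ S n ω) (hApos : ∀ n, 2 ≤ n → ∀ ω, 0 ≤ A n ω)
    (hrec : ∀ᵐ ω, W 1 ω = w ∧ T 1 ω = 0 ∧ ∀ n, 1 ≤ n →
      W (n + 1) ω = max (a * W n ω + S n ω - A (n + 1) ω) 0 ∧
      T (n + 1) ω = T n ω + A (n + 1) ω)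
    (μ : Fin N → Measure ℝ) (hμprob : ∀ i, IsProbabilityMeasure (μ i))
    (hμsupp : ∀ i, μ i (Set.Iio 0) = 0)
    (β : Fin N → ℂ → ℂ) (hβ : ∀ i z, β i z = ∫ x, Complex.exp (-z * x) ∂(μ i))
    (α : Fin N → Fin N → Measure ℝ) (hαfin : ∀ i j, IsFiniteMeasure (α i j))
    (hαsupp : ∀ i j, α i j (Set.Iio 0) = 0)
    (Am : Fin N → Fin N → ℂ → ℂ)
    (hAm : ∀ i j z, Am i j z = ∫ t, Complex.exp (-z * t) ∂(α i j))
    (hfact : ∀ n : ℕ, 1 ≤ n → ∀ (i j : Fin N) (φ : ℝ × ℝ → ℂ), Measurable φ →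
      (∃ C, ∀ x, ‖φ x‖ ≤ C) → ∀ z₁ z₂ : ℂ, 0 ≤ z₁.re → 0 ≤ z₂.re →
      (∫ ω, φ (W n ω, T n ω) * Complex.exp (-z₁ * S n ω - z₂ * A (n + 1) ω) *
          (if Y n ω = i then (1 : ℂ) else 0) * (if Y (n + 1) ω = j then (1 : ℂ) else 0))
        = (∫ ω, φ (W n ω, T n ω) * (if Y n ω = i then (1 : ℂ) else 0)) *
            β i z₁ * Am i j z₂)
    (r s η : ℂ) (hr : ‖r‖ < 1) (hs : s.re = 0) (hη : 0 ≤ η.re) :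
    (∀ j, Summable fun n => ‖ZserTerm W T Y j r s η n‖) ∧
    (∀ j, Summable fun n => ‖ZserTerm W T Y j r ((a : ℂ) * s) η n‖) ∧
    (∀ j, Summable fun n => ‖VserTerm W S A T Y a j r s η n‖) ∧
    (∀ j : Fin N,
      (∑' n, ZserTerm W T Y j r s η n) -
          r * ((volume {ω | Y 1 ω = j}).toReal : ℂ) * Complex.exp (-s * w)
        = r * (∑ i, (∑' n, ZserTerm W T Y i r ((a : ℂ) * s) η n) * β i s * Am i j (η - s))
          + ∑' n, VserTerm W S A T Y a j r s η n) := by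
  have has : ((a : ℂ) * s).re = 0 := by
    simp [Complex.mul_re, Complex.ofReal_re, Complex.ofReal_im, hs]
  have hgeo : Summable fun n : ℕ => ‖r‖ ^ n :=
    summable_geometric_of_lt_one (norm_nonneg _) hr
  have hind : ∀ (n : ℕ) (j : Fin N), Measurable (fun ω => if Y n ω = j then (1:ℂ) else 0) :=
    fun n j => Measurable.ite ((hYmeas n) (measurableSet_singleton j))
      measurable_const measurable_const
  have hindbd : ∀ (n : ℕ) (j : Fin N) (ω : Ω), ‖(if Y n ω = j then (1:ℂ) else 0)‖ ≤ 1 :=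
    fun n j ω => aux_ind_norm_le_one
  -- norm bounds on exponentials
  have hexpWT : ∀ (s' : ℂ), s'.re = 0 → ∀ (n : ℕ), 1 ≤ n → ∀ (ω : Ω),
      ‖Complex.exp (-s' * W n ω - η * T n ω)‖ ≤ 1 := by
    intro s' hs' n hn ω
    apply aux_norm_exp_le_one
    have h : (-s' * (W n ω : ℂ) - η * (T n ω : ℂ)).re
        = -(s'.re * W n ω) - η.re * T n ω := by
      simp [Complex.sub_re, Complex.mul_re, Complex.ofReal_re, Complex.ofReal_im]
    rw [h, hs']
    have := hTpos n hn ω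
    nlinarith
  have hexpT : ∀ (n : ℕ), 1 ≤ n → ∀ (ω : Ω), ‖Complex.exp (-η * T n ω)‖ ≤ 1 := by
    intro n hn ω
    apply aux_norm_exp_le_one
    have h : (-η * (T n ω : ℂ)).re = -(η.re * T n ω) := by
      simp [Complex.mul_re, Complex.ofReal_re, Complex.ofReal_im]
    rw [h]
    have := hTpos n hn ω
    nlinarith
  have hexpmin : ∀ (x : ℝ) (ω : Ω),
      ‖(1:ℂ) - Complex.exp (-s * ((min x 0 : ℝ) : ℂ))‖ ≤ 2 := by
    intro x ω
    have h2 : ‖Complex.exp (-s * ((min x 0 : ℝ) : ℂ))‖ ≤ 1 := by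
      apply aux_norm_exp_le_one
      have h : (-s * ((min x 0 : ℝ) : ℂ)).re = -(s.re * min x 0) := by
        simp [Complex.mul_re, Complex.ofReal_re, Complex.ofReal_im]
      rw [h, hs]; simp
    calc ‖(1:ℂ) - Complex.exp (-s * ((min x 0 : ℝ) : ℂ))‖
        ≤ ‖(1:ℂ)‖ + ‖Complex.exp (-s * ((min x 0 : ℝ) : ℂ))‖ := norm_sub_le _ _
      _ ≤ 1 + 1 := by rw [norm_one]; exact add_le_add_right h2 _
      _ = 2 := by norm_num
  have hexpSA : ∀ (n : ℕ) (ω : Ω),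
      ‖Complex.exp (-s * S (n+1) ω - (η - s) * A (n+2) ω)‖ ≤ 1 := by
    intro n ω
    apply aux_norm_exp_le_one
    have h : (-s * (S (n+1) ω : ℂ) - (η - s) * (A (n+2) ω : ℂ)).re
        = -(s.re * S (n+1) ω) - (η - s).re * A (n+2) ω := by
      simp [Complex.sub_re, Complex.mul_re, Complex.ofReal_re, Complex.ofReal_im]
    rw [h, hs]
    have h1 := hApos (n+2) (by omega) ω
    have h2 : (η - s).re = η.re := by rw [Complex.sub_re, hs, sub_zero]
    rw [h2]
    nlinarith
  -- measurability of the exponential factors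
  have hexpWTmeas : ∀ (s' : ℂ) (n : ℕ),
      Measurable (fun ω => Complex.exp (-s' * W n ω - η * T n ω)) := fun s' n =>
    Complex.measurable_exp.comp
      ((measurable_const.mul (Complex.measurable_ofReal.comp (hWmeas n))).sub
        (measurable_const.mul (Complex.measurable_ofReal.comp (hTmeas n))))
  -- summability of Z series (generic in s' with Re s' = 0)
  have hZsum : ∀ (s' : ℂ), s'.re = 0 → ∀ j,
      Summable fun n => ‖ZserTerm W T Y j r s' η n‖ := by
    intro s' hs' j
    refine Summable.of_nonneg_of_le (fun n => norm_nonneg _) (fun n => ?_)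
      (hgeo.mul_left ‖r‖)
    simp only [ZserTerm]
    rw [norm_mul, norm_pow]
    have hI : ‖∫ ω, Complex.exp (-s' * W (n+1) ω - η * T (n+1) ω) *
        (if Y (n+1) ω = j then (1:ℂ) else 0)‖ ≤ 1 := by
      have hbd : ∀ ω, ‖Complex.exp (-s' * W (n+1) ω - η * T (n+1) ω) *
          (if Y (n+1) ω = j then (1:ℂ) else 0)‖ ≤ 1 := by
        intro ω
        rw [norm_mul]
        exact mul_le_one₀ (hexpWT s' hs' (n+1) (by omega) ω) (norm_nonneg _)
          (hindbd (n+1) j ω)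
      have := norm_integral_le_of_norm_le_const
        (μ := (volume : Measure Ω)) (C := 1) (Filter.Eventually.of_forall hbd)
      simpa using this
    calc ‖r‖ ^ (n+1) * ‖∫ ω, Complex.exp (-s' * W (n+1) ω - η * T (n+1) ω) *
          (if Y (n+1) ω = j then (1:ℂ) else 0)‖
        ≤ ‖r‖ ^ (n+1) * 1 := mul_le_mul_of_nonneg_left hI (by positivity)
      _ = ‖r‖ * ‖r‖ ^ n := by
          rw [mul_one, pow_succ]; ring
  have hVsum : ∀ j, Summable fun n => ‖VserTerm W S A T Y a j r s η n‖ := by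
    intro j
    refine Summable.of_nonneg_of_le (fun n => norm_nonneg _) (fun n => ?_)
      (hgeo.mul_left (2 * ‖r‖ ^ 2))
    simp only [VserTerm]
    rw [norm_mul, norm_pow]
    have hI : ‖∫ ω,
        (1 - Complex.exp (-s * (min (a * W (n+1) ω + S (n+1) ω - A (n+2) ω) 0 : ℝ))) *
          Complex.exp (-η * T (n+2) ω) * (if Y (n+2) ω = j then (1:ℂ) else 0)‖ ≤ 2 := by
      have hbd : ∀ ω, ‖(1 - Complex.exp
          (-s * (min (a * W (n+1) ω + S (n+1) ω - A (n+2) ω) 0 : ℝ))) *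
          Complex.exp (-η * T (n+2) ω) * (if Y (n+2) ω = j then (1:ℂ) else 0)‖ ≤ 2 := by
        intro ω
        rw [norm_mul, norm_mul]
        have h1 := hexpmin (a * W (n+1) ω + S (n+1) ω - A (n+2) ω) ω
        have h3 := hexpT (n+2) (by omega) ω
        have h4 := hindbd (n+2) j ω
        have n1 := norm_nonneg ((1:ℂ) - Complex.exp
          (-s * (min (a * W (n+1) ω + S (n+1) ω - A (n+2) ω) 0 : ℝ)))
        have n2 := norm_nonneg (Complex.exp (-η * (T (n+2) ω : ℂ)))
        have n3 := norm_nonneg (if Y (n+2) ω = j then (1:ℂ) else 0)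
        have hxy : ‖(1:ℂ) - Complex.exp
            (-s * (min (a * W (n+1) ω + S (n+1) ω - A (n+2) ω) 0 : ℝ))‖ *
            ‖Complex.exp (-η * (T (n+2) ω : ℂ))‖ ≤ 2 := by nlinarith
        calc ‖(1:ℂ) - Complex.exp
              (-s * (min (a * W (n+1) ω + S (n+1) ω - A (n+2) ω) 0 : ℝ))‖ *
              ‖Complex.exp (-η * (T (n+2) ω : ℂ))‖ *
              ‖(if Y (n+2) ω = j then (1:ℂ) else 0)‖
            ≤ 2 * 1 := mul_le_mul hxy h4 n3 (by norm_num)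
          _ = 2 := by norm_num
      have := norm_integral_le_of_norm_le_const
        (μ := (volume : Measure Ω)) (C := 2) (Filter.Eventually.of_forall hbd)
      simpa using this
    calc ‖r‖ ^ (n+2) * ‖∫ ω,
          (1 - Complex.exp (-s * (min (a * W (n+1) ω + S (n+1) ω - A (n+2) ω) 0 : ℝ))) *
            Complex.exp (-η * T (n+2) ω) * (if Y (n+2) ω = j then (1:ℂ) else 0)‖
        ≤ ‖r‖ ^ (n+2) * 2 := mul_le_mul_of_nonneg_left hI (by positivity)
      _ = (2 * ‖r‖ ^ 2) * ‖r‖ ^ n := by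
          ring
  refine ⟨hZsum s hs, hZsum _ has, hVsum, ?_⟩
  intro j
  -- the termwise identity
  have hterm : ∀ n : ℕ, ZserTerm W T Y j r s η (n+1) =
      r * (∑ i, ZserTerm W T Y i r ((a:ℂ)*s) η n * β i s * Am i j (η - s))
        + VserTerm W S A T Y a j r s η n := by
    intro n
    -- the bounded test function φ
    set φ : ℝ × ℝ → ℂ := fun x => Complex.exp (-((a:ℂ)*s) * x.1 - η * (max x.2 0 : ℝ)) with hφ
    have hφmeas : Measurable φ := by
      apply Complex.measurable_exp.comp
      exact (measurable_const.mul (Complex.measurable_ofReal.comp measurable_fst)).sub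
        (measurable_const.mul (Complex.measurable_ofReal.comp
          (measurable_snd.max measurable_const)))
    have hφbd : ∀ x, ‖φ x‖ ≤ 1 := by
      intro x
      apply aux_norm_exp_le_one
      have h : (-((a:ℂ)*s) * (x.1 : ℂ) - η * ((max x.2 0 : ℝ) : ℂ)).re
          = -(((a:ℂ)*s).re * x.1) - η.re * max x.2 0 := by
        simp [Complex.sub_re, Complex.mul_re, Complex.ofReal_re, Complex.ofReal_im]
      rw [h, has]
      have : (0:ℝ) ≤ max x.2 0 := le_max_right _ _
      nlinarith
    have hφval : ∀ ω, φ (W (n+1) ω, T (n+1) ω)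
        = Complex.exp (-((a:ℂ)*s) * W (n+1) ω - η * T (n+1) ω) := by
      intro ω
      rw [hφ]
      simp only
      rw [max_eq_left (hTpos (n+1) (by omega) ω)]
    -- abbreviations
    have hg1meas : Measurable (fun ω => Complex.exp (-((a:ℂ)*s) * W (n+1) ω - η * T (n+1) ω) *
        Complex.exp (-s * S (n+1) ω - (η - s) * A (n+2) ω)) :=
      (hexpWTmeas ((a:ℂ)*s) (n+1)).mul (Complex.measurable_exp.comp
        ((measurable_const.mul (Complex.measurable_ofReal.comp (hSmeas (n+1)))).sub
          (measurable_const.mul (Complex.measurable_ofReal.comp (hAmeas (n+2))))))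
    have hg2meas : Measurable (fun ω =>
        (1 - Complex.exp (-s * (min (a * W (n+1) ω + S (n+1) ω - A (n+2) ω) 0 : ℝ))) *
          Complex.exp (-η * T (n+2) ω)) := by
      have hX : Measurable (fun ω => min (a * W (n+1) ω + S (n+1) ω - A (n+2) ω) 0) :=
        (((measurable_const.mul (hWmeas (n+1))).add (hSmeas (n+1))).sub (hAmeas (n+2))).min
          measurable_const
      exact (measurable_const.sub (Complex.measurable_exp.comp
          (measurable_const.mul (Complex.measurable_ofReal.comp hX)))).mul
        (Complex.measurable_exp.comp
          (measurable_const.mul (Complex.measurable_ofReal.comp (hTmeas (n+2)))))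
    have hg1bd : ∀ ω, ‖Complex.exp (-((a:ℂ)*s) * W (n+1) ω - η * T (n+1) ω) *
        Complex.exp (-s * S (n+1) ω - (η - s) * A (n+2) ω)‖ ≤ 1 := by
      intro ω
      rw [norm_mul]
      exact mul_le_one₀ (hexpWT ((a:ℂ)*s) has (n+1) (by omega) ω) (norm_nonneg _)
        (hexpSA n ω)
    have hg2bd : ∀ ω, ‖(1 - Complex.exp
        (-s * (min (a * W (n+1) ω + S (n+1) ω - A (n+2) ω) 0 : ℝ))) *
        Complex.exp (-η * T (n+2) ω)‖ ≤ 2 := by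
      intro ω
      rw [norm_mul]
      have h1 := hexpmin (a * W (n+1) ω + S (n+1) ω - A (n+2) ω) ω
      have h3 := hexpT (n+2) (by omega) ω
      have n1 := norm_nonneg ((1:ℂ) - Complex.exp
        (-s * (min (a * W (n+1) ω + S (n+1) ω - A (n+2) ω) 0 : ℝ)))
      have n2 := norm_nonneg (Complex.exp (-η * (T (n+2) ω : ℂ)))
      nlinarith
    have hg1int : Integrable (fun ω =>
        Complex.exp (-((a:ℂ)*s) * W (n+1) ω - η * T (n+1) ω) *
          Complex.exp (-s * S (n+1) ω - (η - s) * A (n+2) ω) *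
          (if Y (n+2) ω = j then (1:ℂ) else 0)) := by
      apply aux_integrable_of_bounded (hg1meas.mul (hind (n+2) j)) 1
      intro ω
      simp only [Pi.mul_apply]
      rw [norm_mul]
      exact mul_le_one₀ (hg1bd ω) (norm_nonneg _) (hindbd (n+2) j ω)
    have hg2int : Integrable (fun ω =>
        (1 - Complex.exp (-s * (min (a * W (n+1) ω + S (n+1) ω - A (n+2) ω) 0 : ℝ))) *
          Complex.exp (-η * T (n+2) ω) * (if Y (n+2) ω = j then (1:ℂ) else 0)) := by
      apply aux_integrable_of_bounded (hg2meas.mul (hind (n+2) j)) 2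
      intro ω
      simp only [Pi.mul_apply]
      rw [norm_mul]
      have := hg2bd ω
      have := hindbd (n+2) j ω
      have := norm_nonneg ((1 - Complex.exp
        (-s * (min (a * W (n+1) ω + S (n+1) ω - A (n+2) ω) 0 : ℝ))) *
          Complex.exp (-η * (T (n+2) ω : ℂ)))
      nlinarith
    -- a.e. splitting of the Z integrand at time n+2
    have hsplit : ∀ᵐ ω, Complex.exp (-s * W (n+2) ω - η * T (n+2) ω) *
          (if Y (n+2) ω = j then (1:ℂ) else 0)
        = Complex.exp (-((a:ℂ)*s) * W (n+1) ω - η * T (n+1) ω) *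
            Complex.exp (-s * S (n+1) ω - (η - s) * A (n+2) ω) *
            (if Y (n+2) ω = j then (1:ℂ) else 0)
          + (1 - Complex.exp
              (-s * (min (a * W (n+1) ω + S (n+1) ω - A (n+2) ω) 0 : ℝ))) *
              Complex.exp (-η * T (n+2) ω) * (if Y (n+2) ω = j then (1:ℂ) else 0) := by
      filter_upwards [hrec] with ω hω
      beta_reduce
      obtain ⟨-, -, hrecn⟩ := hω
      obtain ⟨hWr, hTr⟩ := hrecn (n+1) (by omega)
      have hca : -((a:ℂ)*s) * ((W (n+1) ω : ℝ) : ℂ) = -s * ((a * W (n+1) ω : ℝ) : ℂ) := by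
        push_cast; ring
      have key : Complex.exp (-s * W (n+2) ω - η * T (n+2) ω)
          = Complex.exp (-((a:ℂ)*s) * W (n+1) ω - η * T (n+1) ω) *
              Complex.exp (-s * S (n+1) ω - (η - s) * A (n+2) ω)
            + (1 - Complex.exp
                (-s * (min (a * W (n+1) ω + S (n+1) ω - A (n+2) ω) 0 : ℝ))) *
                Complex.exp (-η * T (n+2) ω) := by
        rw [hca]
        calc Complex.exp (-s * W (n+2) ω - η * T (n+2) ω)
            = Complex.exp (-s * ((max (a * W (n+1) ω + S (n+1) ω - A (n+2) ω) 0 : ℝ) : ℂ)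
                - η * ((T (n+1) ω + A (n+2) ω : ℝ) : ℂ)) := by rw [← hWr, ← hTr]
          _ = Complex.exp (-s * ((a * W (n+1) ω : ℝ) : ℂ) - η * ((T (n+1) ω : ℝ) : ℂ)) *
                Complex.exp (-s * ((S (n+1) ω : ℝ) : ℂ) - (η - s) * ((A (n+2) ω : ℝ) : ℂ))
              + (1 - Complex.exp
                  (-s * ((min (a * W (n+1) ω + S (n+1) ω - A (n+2) ω) 0 : ℝ) : ℂ))) *
                  Complex.exp (-η * ((T (n+1) ω + A (n+2) ω : ℝ) : ℂ)) :=
              aux_key s η (a * W (n+1) ω) (S (n+1) ω) (A (n+2) ω) (T (n+1) ω)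
          _ = _ := by rw [← hTr]
      rw [key]; ring
    -- split the Z integral
    have hZint : (∫ ω, Complex.exp (-s * W (n+2) ω - η * T (n+2) ω) *
          (if Y (n+2) ω = j then (1:ℂ) else 0))
        = (∫ ω, Complex.exp (-((a:ℂ)*s) * W (n+1) ω - η * T (n+1) ω) *
            Complex.exp (-s * S (n+1) ω - (η - s) * A (n+2) ω) *
            (if Y (n+2) ω = j then (1:ℂ) else 0))
          + ∫ ω, (1 - Complex.exp
              (-s * (min (a * W (n+1) ω + S (n+1) ω - A (n+2) ω) 0 : ℝ))) *
              Complex.exp (-η * T (n+2) ω) * (if Y (n+2) ω = j then (1:ℂ) else 0) := by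
      rw [integral_congr_ae hsplit, integral_add hg1int hg2int]
    -- evaluate the first integral using the factorization assumption
    have hiINT : ∀ i : Fin N, Integrable (fun ω => φ (W (n+1) ω, T (n+1) ω) *
        Complex.exp (-s * S (n+1) ω - (η - s) * A (n+2) ω) *
        (if Y (n+1) ω = i then (1:ℂ) else 0) * (if Y (n+2) ω = j then (1:ℂ) else 0)) := by
      intro i
      apply aux_integrable_of_bounded
      · exact (((hφmeas.comp ((hWmeas (n+1)).prodMk (hTmeas (n+1)))).mul
          (Complex.measurable_exp.comp
            ((measurable_const.mul (Complex.measurable_ofReal.comp (hSmeas (n+1)))).sub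
              (measurable_const.mul (Complex.measurable_ofReal.comp
                (hAmeas (n+2))))))).mul (hind (n+1) i)).mul (hind (n+2) j)
      intro ω
      rw [norm_mul, norm_mul, norm_mul]
      exact mul_le_one₀ (mul_le_one₀ (mul_le_one₀ (hφbd _) (norm_nonneg _) (hexpSA n ω))
        (norm_nonneg _) (hindbd (n+1) i ω)) (norm_nonneg _) (hindbd (n+2) j ω)
    have hfirst : (∫ ω, Complex.exp (-((a:ℂ)*s) * W (n+1) ω - η * T (n+1) ω) *
          Complex.exp (-s * S (n+1) ω - (η - s) * A (n+2) ω) *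
          (if Y (n+2) ω = j then (1:ℂ) else 0))
        = ∑ i, (∫ ω, Complex.exp (-((a:ℂ)*s) * W (n+1) ω - η * T (n+1) ω) *
            (if Y (n+1) ω = i then (1:ℂ) else 0)) * β i s * Am i j (η - s) := by
      have step1 : (∫ ω, Complex.exp (-((a:ℂ)*s) * W (n+1) ω - η * T (n+1) ω) *
            Complex.exp (-s * S (n+1) ω - (η - s) * A (n+2) ω) *
            (if Y (n+2) ω = j then (1:ℂ) else 0))
          = ∫ ω, ∑ i : Fin N, φ (W (n+1) ω, T (n+1) ω) *
              Complex.exp (-s * S (n+1) ω - (η - s) * A (n+2) ω) *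
              (if Y (n+1) ω = i then (1:ℂ) else 0) *
              (if Y (n+2) ω = j then (1:ℂ) else 0) := by
        apply integral_congr_ae
        apply Filter.Eventually.of_forall
        intro ω
        beta_reduce
        have hsum : ∑ i : Fin N, (if Y (n+1) ω = i then (1:ℂ) else 0) = 1 := by simp
        calc Complex.exp (-((a:ℂ)*s) * W (n+1) ω - η * T (n+1) ω) *
              Complex.exp (-s * S (n+1) ω - (η - s) * A (n+2) ω) *
              (if Y (n+2) ω = j then (1:ℂ) else 0)
            = φ (W (n+1) ω, T (n+1) ω) *
                Complex.exp (-s * S (n+1) ω - (η - s) * A (n+2) ω) *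
                (∑ i : Fin N, (if Y (n+1) ω = i then (1:ℂ) else 0)) *
                (if Y (n+2) ω = j then (1:ℂ) else 0) := by
              rw [hsum, hφval]; ring
          _ = ∑ i : Fin N, φ (W (n+1) ω, T (n+1) ω) *
                Complex.exp (-s * S (n+1) ω - (η - s) * A (n+2) ω) *
                (if Y (n+1) ω = i then (1:ℂ) else 0) *
                (if Y (n+2) ω = j then (1:ℂ) else 0) := by
              rw [Finset.mul_sum, Finset.sum_mul]
      rw [step1, integral_finset_sum _ (fun i _ => hiINT i)]
      apply Finset.sum_congr rfl
      intro i _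
      rw [hfact (n+1) (by omega) i j φ hφmeas ⟨1, hφbd⟩ s (η - s) (by rw [hs])
        (by rw [Complex.sub_re, hs]; simpa using hη)]
      have : (∫ ω, φ (W (n+1) ω, T (n+1) ω) * (if Y (n+1) ω = i then (1:ℂ) else 0))
          = ∫ ω, Complex.exp (-((a:ℂ)*s) * W (n+1) ω - η * T (n+1) ω) *
              (if Y (n+1) ω = i then (1:ℂ) else 0) := by
        apply integral_congr_ae
        apply Filter.Eventually.of_forall
        intro ω
        beta_reduce
        rw [hφval]
      rw [this]
    -- put everything together
    simp only [ZserTerm, VserTerm]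
    have hn2 : n + 1 + 1 = n + 2 := rfl
    rw [hn2, hZint, hfirst, mul_add]
    congr 1
    rw [Finset.mul_sum, Finset.mul_sum]
    apply Finset.sum_congr rfl
    intro i _
    ring
  -- assemble the series identity
  have hZsummable : Summable (ZserTerm W T Y j r s η) := (hZsum s hs j).of_norm
  have hZassummable : ∀ i, Summable (ZserTerm W T Y i r ((a:ℂ)*s) η) :=
    fun i => (hZsum _ has i).of_norm
  have hVsummable : Summable (VserTerm W S A T Y a j r s η) := (hVsum j).of_norm
  -- value of the first term
  have hZ0 : ZserTerm W T Y j r s η 0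
      = r * ((volume {ω | Y 1 ω = j}).toReal : ℂ) * Complex.exp (-s * w) := by
    simp only [ZserTerm]
    have h1 : (∫ ω, Complex.exp (-s * W 1 ω - η * T 1 ω) * (if Y 1 ω = j then (1:ℂ) else 0))
        = Complex.exp (-s * w) * ((volume {ω | Y 1 ω = j}).toReal : ℂ) := by
      have hcong : (∫ ω, Complex.exp (-s * W 1 ω - η * T 1 ω) *
          (if Y 1 ω = j then (1:ℂ) else 0))
          = ∫ ω, Complex.exp (-s * w) * (if Y 1 ω = j then (1:ℂ) else 0) := by
        apply integral_congr_ae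
        filter_upwards [hrec] with ω hω
        beta_reduce
        obtain ⟨hW1, hT1, -⟩ := hω
        rw [hW1, hT1]
        simp
      rw [hcong, integral_const_mul]
      congr 1
      have h2 : (fun ω => if Y 1 ω = j then (1:ℂ) else 0)
          = Set.indicator {ω | Y 1 ω = j} (fun _ => (1:ℂ)) := by
        funext ω
        rw [Set.indicator_apply]
        rfl
      have hms : MeasurableSet {ω : Ω | Y 1 ω = j} := (hYmeas 1) (measurableSet_singleton j)
      rw [h2, integral_indicator_const (1:ℂ) hms]
      simp; rfl
    rw [h1]
    ring
  have hsum1 : Summable (fun n => r * (∑ i, ZserTerm W T Y i r ((a:ℂ)*s) η n * β i s *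
      Am i j (η - s))) := by
    apply Summable.mul_left
    exact (hasSum_sum (fun i _ => (((hZassummable i).mul_right (β i s)).mul_right
      (Am i j (η - s))).hasSum)).summable
  have htail : (∑' n, ZserTerm W T Y j r s η (n+1))
      = r * (∑ i, (∑' n, ZserTerm W T Y i r ((a:ℂ)*s) η n) * β i s * Am i j (η - s))
        + ∑' n, VserTerm W S A T Y a j r s η n := by
    calc (∑' n, ZserTerm W T Y j r s η (n+1))
        = ∑' n, (r * (∑ i, ZserTerm W T Y i r ((a:ℂ)*s) η n * β i s * Am i j (η - s))
            + VserTerm W S A T Y a j r s η n) := tsum_congr hterm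
      _ = (∑' n, r * (∑ i, ZserTerm W T Y i r ((a:ℂ)*s) η n * β i s * Am i j (η - s)))
            + ∑' n, VserTerm W S A T Y a j r s η n := Summable.tsum_add hsum1 hVsummable
      _ = r * (∑ i, (∑' n, ZserTerm W T Y i r ((a:ℂ)*s) η n) * β i s * Am i j (η - s))
            + ∑' n, VserTerm W S A T Y a j r s η n := by
          congr 1
          rw [tsum_mul_left]
          congr 1
          rw [Summable.tsum_finsetSum (fun i _ => ((hZassummable i).mul_right (β i s)).mul_right
            (Am i j (η - s)))]
          apply Finset.sum_congr rfl
          intro i _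
          rw [tsum_mul_right, tsum_mul_right]
  rw [Summable.tsum_eq_zero_add hZsummable, hZ0, htail]
  ring
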